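/- Let X and Y be real normed vector spaces with X infinite-dimensional, let T : X → Y be a bounded linear operator, and let E be a dense linear subspace of X. Then ∇(T|_E) ≤ ∇(T). -/

import Mathlib

/-- `inf_{m ∈ S_M} ‖Tm‖`, the infimum of `‖Tm‖` over the unit sphere of a subspace `M`. -/
noncomputable def sphereInf {X Y : Type*} [NormedAddCommGroup X] [NormedSpace ℝ X]
    [NormedAddCommGroup Y] [NormedSpace ℝ Y] (T : X →L[ℝ] Y) (M : Submodule ℝ X) : ℝ :=
  sInf {s : ℝ | ∃ m : X, m ∈ M ∧ ‖m‖ = 1 ∧ s = ‖T m‖}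

/-- `τ(T) = sup_{M ∈ I(X)} inf_{m ∈ S_M} ‖Tm‖`. -/
noncomputable def opTau {X Y : Type*} [NormedAddCommGroup X] [NormedSpace ℝ X]
    [NormedAddCommGroup Y] [NormedSpace ℝ Y] (T : X →L[ℝ] Y) : ℝ :=
  sSup {r : ℝ | ∃ M : Submodule ℝ X, ¬ FiniteDimensional ℝ M ∧ r = sphereInf T M}

/-- `∇(T) = inf_{M ∈ I(X)} τ(T|_M)`. -/
noncomputable def opNabla {X Y : Type*} [NormedAddCommGroup X] [NormedSpace ℝ X]
    [NormedAddCommGroup Y] [NormedSpace ℝ Y] (T : X →L[ℝ] Y) : ℝ :=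
  sInf {r : ℝ | ∃ M : Submodule ℝ X, ¬ FiniteDimensional ℝ M ∧
    r = opTau (T.comp M.subtypeL)}

namespace NablaAux

variable {X Y : Type*} [NormedAddCommGroup X] [NormedSpace ℝ X]
  [NormedAddCommGroup Y] [NormedSpace ℝ Y]

lemma exists_unit {V : Submodule ℝ X} (hV : ¬ FiniteDimensional ℝ V) :
    ∃ v : X, v ∈ V ∧ ‖v‖ = 1 := by
  have hne : V ≠ ⊥ := by rintro rfl; exact hV inferInstance
  obtain ⟨v, hv, hv0⟩ := (Submodule.ne_bot_iff V).mp hne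
  refine ⟨‖v‖⁻¹ • v, V.smul_mem _ hv, ?_⟩
  rw [norm_smul, norm_inv, norm_norm, inv_mul_cancel₀ (norm_ne_zero_iff.mpr hv0)]

lemma notFD_equiv {A B : Type*} [AddCommGroup A] [Module ℝ A] [AddCommGroup B] [Module ℝ B]
    (e : A ≃ₗ[ℝ] B) (h : ¬ FiniteDimensional ℝ A) : ¬ FiniteDimensional ℝ B := by
  intro hB
  exact h e.symm.finiteDimensional

lemma notFD_map {Z Z₂ : Type*} [AddCommGroup Z] [Module ℝ Z] [AddCommGroup Z₂] [Module ℝ Z₂]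
    {f : Z →ₗ[ℝ] Z₂} (hf : Function.Injective f) {V : Submodule ℝ Z}
    (h : ¬ FiniteDimensional ℝ V) : ¬ FiniteDimensional ℝ (V.map f) :=
  notFD_equiv (Submodule.equivMapOfInjective f hf V) h

lemma notFD_of_map {Z Z₂ : Type*} [AddCommGroup Z] [Module ℝ Z] [AddCommGroup Z₂] [Module ℝ Z₂]
    {f : Z →ₗ[ℝ] Z₂} (hf : Function.Injective f) {V : Submodule ℝ Z}
    (h : ¬ FiniteDimensional ℝ (V.map f)) : ¬ FiniteDimensional ℝ V :=
  notFD_equiv (Submodule.equivMapOfInjective f hf V).symm h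

lemma sphereInf_bddBelow (T : X →L[ℝ] Y) (V : Submodule ℝ X) :
    BddBelow {s : ℝ | ∃ m : X, m ∈ V ∧ ‖m‖ = 1 ∧ s = ‖T m‖} := by
  refine ⟨0, ?_⟩; rintro s ⟨m, _, _, rfl⟩; positivity

lemma sphereInf_le (T : X →L[ℝ] Y) {V : Submodule ℝ X} {m : X}
    (hm : m ∈ V) (h1 : ‖m‖ = 1) : sphereInf T V ≤ ‖T m‖ :=
  csInf_le (sphereInf_bddBelow T V) ⟨m, hm, h1, rfl⟩

lemma sphereInf_nonneg (T : X →L[ℝ] Y) (V : Submodule ℝ X) : 0 ≤ sphereInf T V :=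
  Real.sInf_nonneg (by rintro s ⟨m, _, _, rfl⟩; positivity)

lemma sphereInf_le_norm (T : X →L[ℝ] Y) {V : Submodule ℝ X}
    (hV : ¬ FiniteDimensional ℝ V) : sphereInf T V ≤ ‖T‖ := by
  obtain ⟨v, hv, h1⟩ := exists_unit hV
  refine le_trans (sphereInf_le T hv h1) ?_
  simpa [h1] using T.le_opNorm v

lemma sphereInf_comp_subtypeL (T : X →L[ℝ] Y) (q : Submodule ℝ X) (V : Submodule ℝ q) :
    sphereInf (T.comp q.subtypeL) V = sphereInf T (V.map q.subtype) := by
  unfold sphereInf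
  congr 1
  ext s
  constructor
  · rintro ⟨m, hm, h1, rfl⟩
    exact ⟨(m : X), ⟨m, hm, rfl⟩, by rw [← Submodule.coe_norm]; exact h1, by simp⟩
  · rintro ⟨z, ⟨m, hm, rfl⟩, h1, rfl⟩
    exact ⟨m, hm, by rw [Submodule.coe_norm]; exact h1, by simp⟩

lemma opTau_set_bddAbove (T : X →L[ℝ] Y) :
    BddAbove {r : ℝ | ∃ M : Submodule ℝ X, ¬ FiniteDimensional ℝ M ∧ r = sphereInf T M} := by
  refine ⟨‖T‖, ?_⟩; rintro r ⟨V, hV, rfl⟩; exact sphereInf_le_norm T hV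

lemma notFD_top (hZ : ¬ FiniteDimensional ℝ X) : ¬ FiniteDimensional ℝ (⊤ : Submodule ℝ X) :=
  fun h => hZ (@LinearEquiv.finiteDimensional ℝ _ _ _ _ _ _ _
    (Submodule.topEquiv (R := ℝ) (M := X)) h)

lemma opTau_nonneg (T : X →L[ℝ] Y) (hZ : ¬ FiniteDimensional ℝ X) : 0 ≤ opTau T :=
  le_trans (sphereInf_nonneg T ⊤)
    (le_csSup (opTau_set_bddAbove T) ⟨⊤, notFD_top hZ, rfl⟩)

lemma opTau_le (T : X →L[ℝ] Y) (hZ : ¬ FiniteDimensional ℝ X) {b : ℝ}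
    (hb : ∀ V : Submodule ℝ X, ¬ FiniteDimensional ℝ V → sphereInf T V ≤ b) : opTau T ≤ b := by
  refine csSup_le ⟨_, ⟨⊤, notFD_top hZ, rfl⟩⟩ ?_
  rintro r ⟨V, hV, rfl⟩
  exact hb V hV

lemma exists_unit_in_kernels {M : Submodule ℝ X} (hM : ¬ FiniteDimensional ℝ M)
    {n : ℕ} (g : Fin n → (X →L[ℝ] ℝ)) :
    ∃ x : X, x ∈ M ∧ ‖x‖ = 1 ∧ ∀ i, g i x = 0 := by
  set φ : M →ₗ[ℝ] (Fin n → ℝ) :=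
    LinearMap.pi (fun i => ((g i).toLinearMap).comp M.subtype) with hφ
  have hker : LinearMap.ker φ ≠ ⊥ := by
    intro h
    exact hM (FiniteDimensional.of_injective φ (LinearMap.ker_eq_bot.mp h))
  obtain ⟨m, hm, hm0⟩ := (Submodule.ne_bot_iff _).mp hker
  have hmx : (m : X) ≠ 0 := fun h => hm0 (Subtype.ext h)
  refine ⟨‖(m : X)‖⁻¹ • (m : X), M.smul_mem _ m.2, ?_, ?_⟩
  · rw [norm_smul, norm_inv, norm_norm, inv_mul_cancel₀ (norm_ne_zero_iff.mpr hmx)]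
  · intro i
    have h0 : g i (m : X) = 0 := congrFun (LinearMap.mem_ker.mp hm) i
    rw [map_smul, h0, smul_zero]

lemma exists_functional_vanishing {F : Submodule ℝ X} [FiniteDimensional ℝ F]
    {x : X} (hx : x ∉ F) :
    ∃ f : X →L[ℝ] ℝ, f x = 1 ∧ ∀ y ∈ F, f y = 0 := by
  obtain ⟨f, u, hfu, hux⟩ := geometric_hahn_banach_closed_point F.convex
    F.closed_of_finiteDimensional hx
  have h0 : (0 : ℝ) < u := by simpa using hfu 0 F.zero_mem
  have hvan : ∀ y ∈ F, f y = 0 := by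
    intro y hy
    by_contra hfy
    have h1 : f (((|u| + 1) / f y) • y) < u := hfu _ (F.smul_mem _ hy)
    rw [map_smul, smul_eq_mul, div_mul_cancel₀ _ hfy] at h1
    have := le_abs_self u
    linarith
  have hfx : f x ≠ 0 := ne_of_gt (lt_trans h0 hux)
  refine ⟨(f x)⁻¹ • f, ?_, ?_⟩
  · simp [inv_mul_cancel₀ hfx]
  · intro y hy; simp [hvan y hy]

def Good (M : Submodule ℝ X) (n : ℕ) (l : Fin n → X × (X →L[ℝ] ℝ)) : Prop :=
  (∀ i, (l i).1 ∈ M ∧ ‖(l i).1‖ = 1 ∧ (l i).2 (l i).1 = 1) ∧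
  ∀ i j, i ≠ j → (l i).2 ((l j).1) = 0

lemma good_step {M : Submodule ℝ X} (hM : ¬ FiniteDimensional ℝ M) {n : ℕ}
    {l : Fin n → X × (X →L[ℝ] ℝ)} (hl : Good M n l) :
    ∃ p, Good M (n + 1) (Fin.snoc l p) := by
  obtain ⟨x, hxM, hx1, hxker⟩ := exists_unit_in_kernels hM (fun i => (l i).2)
  set F := Submodule.span ℝ (Set.range fun i => (l i).1) with hF
  have : FiniteDimensional ℝ F := Module.Finite.span_of_finite ℝ (Set.finite_range _)
  have hxF : x ∉ F := by
    intro hx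
    obtain ⟨c, hc⟩ := (Submodule.mem_span_range_iff_exists_fun ℝ).mp hx
    have hc0 : ∀ j, c j = 0 := by
      intro j
      have h1 : (l j).2 x = 0 := hxker j
      rw [← hc, map_sum] at h1
      rw [Finset.sum_eq_single j ?_ ?_] at h1
      · rw [map_smul, (hl.1 j).2.2, smul_eq_mul, mul_one] at h1
        exact h1
      · intro i _ hij
        rw [map_smul, hl.2 j i (Ne.symm hij), smul_eq_mul, mul_zero]
      · intro h; exact absurd (Finset.mem_univ j) h
    have hx0 : x = 0 := by rw [← hc]; simp [hc0]
    rw [hx0, norm_zero] at hx1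
    norm_num at hx1
  obtain ⟨f, hfx, hfF⟩ := exists_functional_vanishing hxF
  refine ⟨(x, f), ?_, ?_⟩
  · intro i
    refine Fin.lastCases ?_ ?_ i
    · simpa using ⟨hxM, hx1, hfx⟩
    · intro j; simpa using hl.1 j
  · intro i j hij
    rcases Fin.eq_castSucc_or_eq_last i with ⟨i', rfl⟩ | rfl <;>
      rcases Fin.eq_castSucc_or_eq_last j with ⟨j', rfl⟩ | rfl
    · have hne : i' ≠ j' := fun h => hij (by rw [h])
      simpa using hl.2 i' j' hne
    · simpa using hxker i'
    · simpa using hfF _ (Submodule.subset_span (Set.mem_range_self j'))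
    · exact absurd rfl hij

noncomputable def chain {M : Submodule ℝ X} (hM : ¬ FiniteDimensional ℝ M) :
    (n : ℕ) → {l : Fin n → X × (X →L[ℝ] ℝ) // Good M n l}
  | 0 => ⟨fun i => i.elim0, ⟨fun i => i.elim0, fun i => i.elim0⟩⟩
  | n + 1 =>
    ⟨Fin.snoc (chain hM n).1 (good_step hM (chain hM n).2).choose,
      (good_step hM (chain hM n).2).choose_spec⟩

noncomputable def xseq {M : Submodule ℝ X} (hM : ¬ FiniteDimensional ℝ M) (n : ℕ) : X :=
  ((chain hM (n + 1)).1 (Fin.last n)).1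

noncomputable def fseq {M : Submodule ℝ X} (hM : ¬ FiniteDimensional ℝ M) (n : ℕ) :
    X →L[ℝ] ℝ :=
  ((chain hM (n + 1)).1 (Fin.last n)).2

lemma chain_apply {M : Submodule ℝ X} (hM : ¬ FiniteDimensional ℝ M) :
    ∀ (n : ℕ) (i : Fin n), (chain hM n).1 i = (xseq hM ↑i, fseq hM ↑i)
  | n + 1, i => by
    rcases Fin.eq_castSucc_or_eq_last i with ⟨j, rfl⟩ | rfl
    · have h1 : (chain hM (n + 1)).1 j.castSucc = (chain hM n).1 j := by
        simp only [chain, Fin.snoc_castSucc]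
      rw [h1, chain_apply hM n j]
      simp
    · simp [xseq, fseq]

lemma xseq_mem {M : Submodule ℝ X} (hM : ¬ FiniteDimensional ℝ M) (n : ℕ) :
    xseq hM n ∈ M := ((chain hM (n + 1)).2.1 (Fin.last n)).1

lemma xseq_norm {M : Submodule ℝ X} (hM : ¬ FiniteDimensional ℝ M) (n : ℕ) :
    ‖xseq hM n‖ = 1 := ((chain hM (n + 1)).2.1 (Fin.last n)).2.1

lemma fseq_self {M : Submodule ℝ X} (hM : ¬ FiniteDimensional ℝ M) (n : ℕ) :
    fseq hM n (xseq hM n) = 1 := ((chain hM (n + 1)).2.1 (Fin.last n)).2.2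

lemma fseq_ne {M : Submodule ℝ X} (hM : ¬ FiniteDimensional ℝ M) {m n : ℕ} (h : m ≠ n) :
    fseq hM m (xseq hM n) = 0 := by
  set N := max m n + 1 with hN
  have hm : m < N := lt_of_le_of_lt (le_max_left m n) (Nat.lt_succ_self _)
  have hn : n < N := lt_of_le_of_lt (le_max_right m n) (Nat.lt_succ_self _)
  have h1 := (chain hM N).2.2 ⟨m, hm⟩ ⟨n, hn⟩ (by simp [Fin.ext_iff]; exact h)
  rw [chain_apply hM N ⟨m, hm⟩, chain_apply hM N ⟨n, hn⟩] at h1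
  exact h1

lemma xseq_li {M : Submodule ℝ X} (hM : ¬ FiniteDimensional ℝ M) :
    LinearIndependent ℝ (xseq hM) := by
  rw [linearIndependent_iff']
  intro s g hsum i hi
  have h := congrArg (fseq hM i) hsum
  rw [map_sum, map_zero] at h
  rw [Finset.sum_eq_single_of_mem i hi ?_] at h
  · rw [map_smul, fseq_self hM i, smul_eq_mul, mul_one] at h
    exact h
  · intro j _ hj
    rw [map_smul, fseq_ne hM (Ne.symm hj), smul_eq_mul, mul_zero]

end NablaAux

open NablaAux in
set_option maxHeartbeats 2000000 in
/-- `∇(T|_E) ≤ ∇(T)` for any dense subspace `E`. -/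
theorem nabla_restrict_le {X Y : Type*} [NormedAddCommGroup X] [NormedSpace ℝ X]
    [NormedAddCommGroup Y] [NormedSpace ℝ Y] (hX : ¬ FiniteDimensional ℝ X)
    (T : X →L[ℝ] Y) (E : Submodule ℝ X) (hE : Dense (E : Set X)) :
    opNabla (T.comp E.subtypeL) ≤ opNabla T := by
  classical
  unfold opNabla
  have hRne : {r : ℝ | ∃ M : Submodule ℝ X, ¬ FiniteDimensional ℝ M ∧
      r = opTau (T.comp M.subtypeL)}.Nonempty := ⟨_, ⟨⊤, notFD_top hX, rfl⟩⟩
  refine le_csInf hRne ?_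
  rintro b ⟨M, hM, rfl⟩
  refine le_of_forall_pos_le_add ?_
  intro ε hε
  have hLbdd : BddBelow {r : ℝ | ∃ N : Submodule ℝ ↥E, ¬ FiniteDimensional ℝ N ∧
      r = opTau ((T.comp E.subtypeL).comp N.subtypeL)} := by
    refine ⟨0, ?_⟩
    rintro r ⟨N, hN, rfl⟩
    exact opTau_nonneg _ hN
  have hTpos : (0 : ℝ) < ‖T‖ + 1 := by positivity
  set δ : ℝ := min 1 (ε / (‖T‖ + 1)) with hδdef
  have hδpos : 0 < δ := lt_min one_pos (div_pos hε hTpos)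
  have hδ1 : δ ≤ 1 := min_le_left _ _
  have hδε : ‖T‖ * δ ≤ ε := by
    have h1 : δ ≤ ε / (‖T‖ + 1) := min_le_right _ _
    have h2 : ‖T‖ * δ ≤ ‖T‖ * (ε / (‖T‖ + 1)) :=
      mul_le_mul_of_nonneg_left h1 (norm_nonneg T)
    have h3 : ‖T‖ * (ε / (‖T‖ + 1)) ≤ ε := by
      rw [mul_div_assoc'] at *
      rw [div_le_iff₀ hTpos]
      nlinarith [norm_nonneg T, hε.le]
    linarith
  -- choose approximating vectors in E
  have hchoose : ∀ n : ℕ, ∃ e : X, e ∈ E ∧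
      (1 + ‖fseq hM n‖) * ‖e - xseq hM n‖ ≤ δ / 4 * (1 / 2) ^ n := by
    intro n
    have hr : 0 < (δ / 4 * (1 / 2 : ℝ) ^ n) / (1 + ‖fseq hM n‖) := by positivity
    obtain ⟨e, heE, hdist⟩ := Metric.mem_closure_iff.mp (hE (xseq hM n)) _ hr
    refine ⟨e, heE, ?_⟩
    have hle : ‖e - xseq hM n‖ ≤ (δ / 4 * (1 / 2 : ℝ) ^ n) / (1 + ‖fseq hM n‖) := by
      rw [dist_eq_norm, ← norm_sub_rev] at hdist
      exact hdist.le
    have hpos : (0 : ℝ) < 1 + ‖fseq hM n‖ := by positivity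
    calc (1 + ‖fseq hM n‖) * ‖e - xseq hM n‖
        ≤ (1 + ‖fseq hM n‖) * ((δ / 4 * (1 / 2 : ℝ) ^ n) / (1 + ‖fseq hM n‖)) :=
          mul_le_mul_of_nonneg_left hle hpos.le
      _ = δ / 4 * (1 / 2 : ℝ) ^ n := by field_simp
  choose e heE hee using hchoose
  have hli := xseq_li hM
  set P : Submodule ℝ X := Submodule.span ℝ (Set.range (xseq hM)) with hPdef
  have hP_le_M : P ≤ M := Submodule.span_le.mpr (by rintro _ ⟨n, rfl⟩; exact xseq_mem hM n)
  set Bx : Module.Basis ℕ ℝ ↥P := Module.Basis.span hli with hBx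
  set U : ↥P →ₗ[ℝ] X := Bx.constr ℝ e with hU
  have hcoe : ∀ w : ↥P, (w : X) = (Bx.repr w).sum fun i a => a • xseq hM i := by
    intro w
    conv_lhs => rw [← Bx.linearCombination_repr w]
    rw [Finsupp.linearCombination_apply, Finsupp.sum, Finsupp.sum]
    rw [AddSubmonoidClass.coe_finset_sum]
    refine Finset.sum_congr rfl fun i _ => ?_
    rw [SetLike.val_smul, Module.Basis.span_apply]
  have hrepr : ∀ (w : ↥P) (j : ℕ), (Bx.repr w) j = fseq hM j (w : X) := by
    intro w j
    conv_rhs => rw [hcoe w]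
    rw [map_finsuppSum, Finsupp.sum_eq_single j ?_ ?_]
    · rw [map_smul, fseq_self hM j, smul_eq_mul, mul_one]
    · intro b hb hbj
      rw [map_smul, fseq_ne hM (Ne.symm hbj), smul_eq_mul, mul_zero]
    · intro _
      rw [zero_smul, map_zero]
  have hUsub : ∀ w : ↥P, U w - (w : X) = (Bx.repr w).sum fun i a => a • (e i - xseq hM i) := by
    intro w
    rw [hU, Module.Basis.constr_apply]
    conv_lhs => rw [hcoe w]
    rw [Finsupp.sum, Finsupp.sum, Finsupp.sum, ← Finset.sum_sub_distrib]
    exact Finset.sum_congr rfl fun i _ => (smul_sub _ _ _).symm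
  have hUest : ∀ w : ↥P, ‖U w - (w : X)‖ ≤ δ / 2 * ‖(w : X)‖ := by
    intro w
    rw [hUsub w, Finsupp.sum]
    refine le_trans (norm_sum_le _ _) ?_
    have hterm : ∀ i ∈ (Bx.repr w).support,
        ‖Bx.repr w i • (e i - xseq hM i)‖ ≤ ‖(w : X)‖ * (δ / 4 * (1 / 2) ^ i) := by
      intro i _
      rw [norm_smul, Real.norm_eq_abs]
      have h1 : |Bx.repr w i| ≤ ‖fseq hM i‖ * ‖(w : X)‖ := by
        rw [hrepr w i]
        have := (fseq hM i).le_opNorm (w : X)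
        rwa [Real.norm_eq_abs] at this
      have h2 := hee i
      have h3 : (0 : ℝ) ≤ ‖e i - xseq hM i‖ := norm_nonneg _
      have h4 : (0 : ℝ) ≤ ‖(w : X)‖ := norm_nonneg _
      nlinarith [mul_le_mul_of_nonneg_right h1 h3, mul_le_mul_of_nonneg_left h2 h4,
        abs_nonneg (Bx.repr w i), norm_nonneg (fseq hM i)]
    refine le_trans (Finset.sum_le_sum hterm) ?_
    rw [← Finset.mul_sum]
    have h5 : ∑ i ∈ (Bx.repr w).support, (δ / 4 * (1 / 2 : ℝ) ^ i) ≤ δ / 2 := by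
      have hsummable : Summable (fun i : ℕ => δ / 4 * (1 / 2 : ℝ) ^ i) :=
        (summable_geometric_of_lt_one (by norm_num) (by norm_num)).mul_left _
      have hsum : ∑' i : ℕ, (δ / 4 * (1 / 2 : ℝ) ^ i) = δ / 2 := by
        rw [tsum_mul_left, tsum_geometric_of_lt_one (by norm_num) (by norm_num)]
        norm_num
        ring
      refine le_trans (Summable.sum_le_tsum _ (fun i _ => by positivity) hsummable) (le_of_eq hsum)
    calc ‖(w : X)‖ * ∑ i ∈ (Bx.repr w).support, (δ / 4 * (1 / 2 : ℝ) ^ i)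
        ≤ ‖(w : X)‖ * (δ / 2) := mul_le_mul_of_nonneg_left h5 (norm_nonneg _)
      _ = δ / 2 * ‖(w : X)‖ := mul_comm _ _
  have hUinj : Function.Injective U := by
    refine LinearMap.ker_eq_bot.mp ?_
    rw [Submodule.eq_bot_iff]
    intro w hw
    have h0 : U w = 0 := hw
    have h1 := hUest w
    rw [h0, zero_sub, norm_neg] at h1
    have hzero : ‖(w : X)‖ = 0 := by nlinarith [norm_nonneg (w : X)]
    exact Subtype.ext (norm_eq_zero.mp hzero)
  set A : Submodule ℝ X := LinearMap.range U with hA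
  have hA_le_E : A ≤ E := by
    rintro a ⟨w, rfl⟩
    rw [hU, Module.Basis.constr_apply, Finsupp.sum]
    exact Submodule.sum_mem E fun i _ => E.smul_mem _ (heE i)
  have hP_nfd : ¬ FiniteDimensional ℝ P := by
    intro h
    haveI := h
    have : Finite ℕ := Module.Finite.finite_basis Bx
    exact not_finite ℕ
  have hA_nfd : ¬ FiniteDimensional ℝ A := notFD_equiv (LinearEquiv.ofInjective U hUinj) hP_nfd
  set N : Submodule ℝ ↥E := A.comap E.subtype with hNdef
  have hNmap : N.map E.subtype = A := by
    rw [hNdef, Submodule.map_comap_subtype]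
    exact inf_eq_right.mpr hA_le_E
  have hN_nfd : ¬ FiniteDimensional ℝ N :=
    notFD_of_map E.injective_subtype (by rw [hNmap]; exact hA_nfd)
  refine le_trans (csInf_le hLbdd ⟨N, hN_nfd, rfl⟩) ?_
  refine opTau_le _ hN_nfd ?_
  intro V hV
  rw [sphereInf_comp_subtypeL, sphereInf_comp_subtypeL]
  set W : Submodule ℝ X := (V.map N.subtype).map E.subtype with hW
  have hW_le_A : W ≤ A := by
    rw [← hNmap]
    exact Submodule.map_mono (Submodule.map_subtype_le N V)
  have hW_nfd : ¬ FiniteDimensional ℝ W :=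
    notFD_map E.injective_subtype (notFD_map N.injective_subtype hV)
  set WP : Submodule ℝ ↥P := W.comap U with hWP
  have hWPmap : WP.map U = W := by
    rw [hWP, Submodule.map_comap_eq]
    exact inf_eq_right.mpr hW_le_A
  have hWP_nfd : ¬ FiniteDimensional ℝ WP :=
    notFD_of_map hUinj (by rw [hWPmap]; exact hW_nfd)
  set WM : Submodule ℝ X := WP.map P.subtype with hWM
  have hWM_le_M : WM ≤ M := le_trans (Submodule.map_subtype_le P WP) hP_le_M
  have hWM_nfd : ¬ FiniteDimensional ℝ WM := notFD_map P.injective_subtype hWP_nfd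
  have key : ∀ m : X, m ∈ WM → ‖m‖ = 1 → sphereInf T W ≤ ‖T m‖ + ‖T‖ * δ := by
    intro m hm h1m
    obtain ⟨p, hpWP, rfl⟩ := Submodule.mem_map.mp hm
    simp only [Submodule.subtype_apply] at h1m ⊢
    set v : X := U p with hv
    have hvW : v ∈ W := by rw [← hWPmap]; exact Submodule.mem_map_of_mem hpWP
    have hest : ‖v - (p : X)‖ ≤ δ / 2 := by
      have := hUest p
      rwa [h1m, mul_one] at this
    have hub : |1 - ‖v‖| ≤ δ / 2 := by
      have habs := abs_norm_sub_norm_le ((p : X)) v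
      rw [h1m, norm_sub_rev] at habs
      linarith
    have hvlb : 1 - δ / 2 ≤ ‖v‖ := by
      have := abs_le.mp hub
      linarith [this.2]
    have hvpos : 0 < ‖v‖ := by linarith
    set u : X := ‖v‖⁻¹ • v with hu
    have huW : u ∈ W := W.smul_mem _ hvW
    have hu1 : ‖u‖ = 1 := by
      rw [hu, norm_smul, norm_inv, norm_norm, inv_mul_cancel₀ (ne_of_gt hvpos)]
    have huv : ‖u - v‖ ≤ δ / 2 := by
      have heq : u - v = (‖v‖⁻¹ - 1) • v := by rw [sub_smul, one_smul, hu]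
      have hcalc : (‖v‖⁻¹ - 1) * ‖v‖ = 1 - ‖v‖ := by field_simp
      calc ‖u - v‖ = |‖v‖⁻¹ - 1| * ‖v‖ := by rw [heq, norm_smul, Real.norm_eq_abs]
        _ = |(‖v‖⁻¹ - 1) * ‖v‖| := by rw [abs_mul, abs_of_nonneg (norm_nonneg v)]
        _ = |1 - ‖v‖| := by rw [hcalc]
        _ ≤ δ / 2 := hub
    have hum : ‖u - (p : X)‖ ≤ δ := by
      have heq : u - (p : X) = (u - v) + (v - (p : X)) := by abel
      have := norm_add_le (u - v) (v - (p : X))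
      rw [← heq] at this
      linarith
    have hTu : ‖T u‖ ≤ ‖T (p : X)‖ + ‖T‖ * δ := by
      have heq : T u = T (p : X) + T (u - (p : X)) := by rw [map_sub]; abel
      have h6 := norm_add_le (T (p : X)) (T (u - (p : X)))
      rw [← heq] at h6
      have h7 := T.le_opNorm (u - (p : X))
      have h8 := mul_le_mul_of_nonneg_left hum (norm_nonneg T)
      linarith
    exact le_trans (sphereInf_le T huW hu1) hTu
  have h2 : sphereInf T W - ‖T‖ * δ ≤ sphereInf T WM := by
    obtain ⟨v0, hv0, hv01⟩ := exists_unit hWM_nfd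
    refine le_csInf ⟨‖T v0‖, v0, hv0, hv01, rfl⟩ ?_
    rintro s ⟨m, hm, h1, rfl⟩
    linarith [key m hm h1]
  have h3 : sphereInf T WM ≤ opTau (T.comp M.subtypeL) := by
    set VM : Submodule ℝ ↥M := WM.comap M.subtype with hVM
    have hVMmap : VM.map M.subtype = WM := by
      rw [hVM, Submodule.map_comap_subtype]
      exact inf_eq_right.mpr hWM_le_M
    have hVM_nfd : ¬ FiniteDimensional ℝ VM :=
      notFD_of_map M.injective_subtype (by rw [hVMmap]; exact hWM_nfd)
    have heq := sphereInf_comp_subtypeL T M VM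
    rw [hVMmap] at heq
    rw [← heq]
    exact le_csSup (opTau_set_bddAbove _) ⟨VM, hVM_nfd, rfl⟩
  linarith
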